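/- Let P be a finite p-group of class 2 and exponent p, and let 𝓗 be a fully refined central decomposition of P. If Q is generated by the members of 𝓗 not contained in Z(P) and A is generated by the members of 𝓗 contained in Z(P), then P = Q × A, Q' = Z(Q), and Q'A = Z(P). -/

import Mathlib

/-- A central decomposition of a group `G`: a set of subgroups whose distinct members
commute elementwise, which generates `G`, but no proper subset of which generates `G`. -/
def IsCentralDecomp (G : Type*) [Group G] (𝓗 : Set (Subgroup G)) : Prop :=
  (∀ H ∈ 𝓗, ∀ K ∈ 𝓗, H ≠ K → ∀ x ∈ H, ∀ y ∈ K, Commute x y) ∧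
  sSup 𝓗 = ⊤ ∧
  ∀ 𝓙 ⊆ 𝓗, sSup 𝓙 = ⊤ → 𝓙 = 𝓗

/-- A group is centrally indecomposable if its only central decomposition is `{⊤}`. -/
def CentrallyIndecomposable (G : Type*) [Group G] : Prop :=
  ∀ 𝓗 : Set (Subgroup G), IsCentralDecomp G 𝓗 → 𝓗 = {⊤}

open scoped Pointwise
open scoped commutatorElement

lemma sup_mul_rep {G : Type*} [Group G] {H W : Subgroup G}
    (hc : W ≤ Subgroup.centralizer (H : Set G)) {x : G} (hx : x ∈ H ⊔ W) :
    ∃ h ∈ H, ∃ w ∈ W, x = h * w := by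
  have key : ∀ w ∈ W, ∀ h ∈ H, h * w = w * h := fun w hw h hh =>
    Subgroup.mem_centralizer_iff.mp (hc hw) h hh
  let S : Subgroup G :=
    { carrier := {x | ∃ h ∈ H, ∃ w ∈ W, x = h * w}
      one_mem' := ⟨1, H.one_mem, 1, W.one_mem, (one_mul 1).symm⟩
      mul_mem' := by
        rintro a b ⟨h1, hh1, w1, hw1, rfl⟩ ⟨h2, hh2, w2, hw2, rfl⟩
        refine ⟨h1 * h2, H.mul_mem hh1 hh2, w1 * w2, W.mul_mem hw1 hw2, ?_⟩
        have := key w1 hw1 h2 hh2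
        calc h1 * w1 * (h2 * w2) = h1 * (w1 * h2) * w2 := by group
          _ = h1 * (h2 * w1) * w2 := by rw [← this]
          _ = h1 * h2 * (w1 * w2) := by group
      inv_mem' := by
        rintro a ⟨h, hh, w, hw, rfl⟩
        refine ⟨h⁻¹, H.inv_mem hh, w⁻¹, W.inv_mem hw, ?_⟩
        have := key w⁻¹ (W.inv_mem hw) h⁻¹ (H.inv_mem hh)
        rw [mul_inv_rev, ← this] }
  have hS : H ⊔ W ≤ S :=
    sup_le (fun h hh => ⟨h, hh, 1, W.one_mem, (mul_one h).symm⟩)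
      (fun w hw => ⟨1, H.one_mem, w, hw, (one_mul w).symm⟩)
  exact hS hx

set_option maxHeartbeats 1000000 in
lemma lemC {G : Type*} [Group G] [Finite G] {p : ℕ} (hp : p.Prime)
    (hexp : ∀ x : G, x ^ p = 1) {z : G} (hz : z ∈ Subgroup.center G)
    {D : Subgroup G} (hD : commutator G ≤ D) (hzD : z ∉ D)
    (hzt : Subgroup.closure {z} ≠ ⊤) (hind : CentrallyIndecomposable G) : False := by
  haveI : Fact (Nat.Prime p) := ⟨hp⟩
  obtain ⟨M, ⟨hDM, hzM⟩, hmax⟩ :=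
    Set.Finite.exists_maximalFor id {M : Subgroup G | D ≤ M ∧ z ∉ M} (Set.toFinite _)
      ⟨D, le_rfl, hzD⟩
  have hMn : M.Normal := by
    constructor
    intro m hm g
    have h1 : ⁅g, m⁆ ∈ M :=
      hDM (hD (Subgroup.commutator_mem_commutator (Subgroup.mem_top g) (Subgroup.mem_top m)))
    have h2 : g * m * g⁻¹ = ⁅g, m⁆ * m := by group
    rw [h2]; exact M.mul_mem h1 hm
  have hMtop : M ≠ ⊤ := fun h => hzM (h ▸ Subgroup.mem_top z)
  have hsup : M ⊔ Subgroup.closure {z} = ⊤ := by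
    rw [eq_top_iff]
    intro x _
    by_cases hxM : x ∈ M
    · exact Subgroup.mem_sup_left hxM
    · have hx1 : x ≠ 1 := fun h => hxM (h ▸ M.one_mem)
      have hordx : orderOf x = p := orderOf_eq_prime (hexp x) hx1
      have hzMx : z ∈ M ⊔ Subgroup.closure {x} := by
        by_contra hzc
        have heq : M ⊔ Subgroup.closure {x} ≤ M :=
          hmax (j := M ⊔ Subgroup.closure {x}) ⟨hDM.trans le_sup_left, hzc⟩ le_sup_left
        exact hxM (heq (Subgroup.mem_sup_right (Subgroup.subset_closure rfl)))
      -- write z = m * x^n  using normality of M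
      have hmem : z ∈ ((M : Set G) * (Subgroup.closure {x} : Set G)) := by
        rw [← Subgroup.normal_mul]; exact hzMx
      obtain ⟨m, hm, c, hc, hmc⟩ := Set.mem_mul.mp hmem
      obtain ⟨n, rfl⟩ := Subgroup.mem_closure_singleton.mp hc
      have hxn : x ^ n = m⁻¹ * z := by rw [← hmc]; group
      have hxn1 : x ^ n ≠ 1 := by
        intro h
        apply hzM
        have : z = m := by rw [← hmc, h, mul_one]
        exact this ▸ hm
      -- x ∈ zpowers (x^n)
      have hordxn : orderOf (x ^ n) = p := by
        refine orderOf_eq_prime ?_ hxn1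
        rw [← zpow_natCast, ← zpow_mul, mul_comm, zpow_mul, zpow_natCast, hexp x, one_zpow]
      have hle : Subgroup.zpowers (x ^ n) ≤ Subgroup.zpowers x :=
        Subgroup.zpowers_le.mpr (zpow_mem (Subgroup.mem_zpowers x) n)
      have heq : Subgroup.zpowers (x ^ n) = Subgroup.zpowers x := by
        apply Subgroup.eq_of_le_of_card_ge hle
        rw [Nat.card_zpowers, Nat.card_zpowers, hordx, hordxn]
      have hxmem : x ∈ Subgroup.zpowers (x ^ n) := by
        rw [heq]; exact Subgroup.mem_zpowers x
      obtain ⟨k, hk⟩ := Subgroup.mem_zpowers_iff.mp hxmem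
      have hxeq : x = (m⁻¹ * z) ^ k := by rw [← hxn]; exact hk.symm
      rw [hxeq]
      have h1 : m⁻¹ ∈ M ⊔ Subgroup.closure {z} := Subgroup.mem_sup_left (M.inv_mem hm)
      have h2 : z ∈ M ⊔ Subgroup.closure {z} :=
        Subgroup.mem_sup_right (Subgroup.subset_closure rfl)
      exact zpow_mem (mul_mem h1 h2) k
  -- {M, ⟨z⟩} is a central decomposition
  have hzcen : Subgroup.closure {z} ≤ Subgroup.center G :=
    (Subgroup.closure_le _).mpr (Set.singleton_subset_iff.mpr hz)
  have hdec : IsCentralDecomp G {M, Subgroup.closure {z}} := by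
    refine ⟨?_, by rw [sSup_pair]; exact hsup, ?_⟩
    · rintro H (rfl | hH) K (rfl | hK) hne x hx y hy
      · exact absurd rfl hne
      · rw [Set.mem_singleton_iff] at hK; subst hK
        exact (Subgroup.mem_center_iff.mp (hzcen hy) x)
      · rw [Set.mem_singleton_iff] at hH; subst hH
        exact (Subgroup.mem_center_iff.mp (hzcen hx) y).symm
      · rw [Set.mem_singleton_iff] at hH hK; exact absurd (hH.trans hK.symm) hne
    · intro J hJ hJtop
      have hMJ : M ∈ J := by
        by_contra hMJ
        have hle : sSup J ≤ Subgroup.closure {z} := by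
          apply sSup_le
          intro K hK
          rcases hJ hK with rfl | hK'
          · exact absurd hK hMJ
          · rw [Set.mem_singleton_iff] at hK'; exact hK'.le
        exact hzt (top_le_iff.mp (hJtop ▸ hle))
      have hzJ : Subgroup.closure {z} ∈ J := by
        by_contra hzJ
        have hle : sSup J ≤ M := by
          apply sSup_le
          intro K hK
          rcases hJ hK with rfl | hK'
          · exact le_rfl
          · rw [Set.mem_singleton_iff] at hK'; exact absurd (hK' ▸ hK) hzJ
        exact hMtop (top_le_iff.mp (hJtop ▸ hle))
      apply Set.Subset.antisymm hJ
      rintro K (rfl | hK)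
      · exact hMJ
      · rw [Set.mem_singleton_iff] at hK; exact hK ▸ hzJ
  have := hind _ hdec
  have hM : M ∈ ({⊤} : Set (Subgroup G)) := this ▸ Set.mem_insert M _
  exact hMtop (Set.mem_singleton_iff.mp hM)


/-- If `𝓗` is a fully refined central decomposition of `P`, `Q` is generated by the members
not contained in the center and `A` by the central members, then `P = Q × A`,
`Q' = Z(Q)` and `Q'A = Z(P)`. -/
theorem stmt_2 {P : Type*} [Group P] [Finite P] {p : ℕ} (hp : p.Prime) (hodd : Odd p)
    (hexp : ∀ x : P, x ^ p = 1) (hclass : commutator P ≤ Subgroup.center P)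
    (𝓗 : Set (Subgroup P)) (hcd : IsCentralDecomp P 𝓗)
    (hfr : ∀ H ∈ 𝓗, CentrallyIndecomposable H)
    (Q A : Subgroup P)
    (hQ : Q = sSup {H | H ∈ 𝓗 ∧ ¬ H ≤ Subgroup.center P})
    (hA : A = sSup {H | H ∈ 𝓗 ∧ H ≤ Subgroup.center P}) :
    Q ⊓ A = ⊥ ∧ Q ⊔ A = ⊤ ∧
      ⁅Q, Q⁆ = Q ⊓ Subgroup.centralizer (Q : Set P) ∧
      ⁅Q, Q⁆ ⊔ A = Subgroup.center P := by
  classical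
  have hexpS : ∀ (H : Subgroup P) (x : ↥H), x ^ p = 1 := fun H x =>
    Subtype.ext (by simpa using hexp (x : P))
  -- members not in the center satisfy Z(H) ≤ [H,H]
  have lemA : ∀ H ∈ 𝓗, ¬ H ≤ Subgroup.center P →
      ∀ h ∈ H, (∀ y ∈ H, h * y = y * h) → h ∈ ⁅H, H⁆ := by
    intro H hH hHc h hh hcomm
    by_contra hnot
    -- H is nonabelian
    have hnab : ∃ a ∈ H, ∃ b ∈ H, a * b ≠ b * a := by
      by_contra hab
      push_neg at hab
      apply hHc
      have hcent : ∀ K ∈ 𝓗, K ≤ Subgroup.centralizer (H : Set P) := by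
        intro K hK
        by_cases hKH : K = H
        · subst hKH
          intro k hk
          exact Subgroup.mem_centralizer_iff.mpr (fun y hy => hab y hy k hk)
        · intro k hk
          exact Subgroup.mem_centralizer_iff.mpr
            (fun y hy => hcd.1 H hH K hK (fun e => hKH e.symm) y hy k hk)
      have htop : (⊤ : Subgroup P) ≤ Subgroup.centralizer (H : Set P) := by
        rw [← hcd.2.1]; exact sSup_le hcent
      intro x hx
      rw [Subgroup.mem_center_iff]
      intro g
      exact (Subgroup.mem_centralizer_iff.mp (htop (Subgroup.mem_top g)) x hx).symm
    obtain ⟨a, ha, b, hb, hab⟩ := hnab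
    set z : ↥H := ⟨h, hh⟩ with hz_def
    have hz : z ∈ Subgroup.center ↥H := by
      rw [Subgroup.mem_center_iff]
      intro g
      exact Subtype.ext ((hcomm (g : P) g.2).symm)
    have hzD : z ∉ commutator ↥H := by
      intro hzd
      apply hnot
      have hmem : h ∈ Subgroup.map H.subtype (commutator ↥H) := ⟨z, hzd, rfl⟩
      rwa [commutator_def, Subgroup.map_commutator, ← MonoidHom.range_eq_map,
        Subgroup.range_subtype] at hmem
    have hzt : Subgroup.closure {z} ≠ ⊤ := by
      intro htop
      have ha' : (⟨a, ha⟩ : ↥H) ∈ Subgroup.closure {z} := htop ▸ Subgroup.mem_top _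
      have hb' : (⟨b, hb⟩ : ↥H) ∈ Subgroup.closure {z} := htop ▸ Subgroup.mem_top _
      obtain ⟨m, hm⟩ := Subgroup.mem_closure_singleton.mp ha'
      obtain ⟨n, hn⟩ := Subgroup.mem_closure_singleton.mp hb'
      apply hab
      have : (⟨a, ha⟩ : ↥H) * ⟨b, hb⟩ = ⟨b, hb⟩ * ⟨a, ha⟩ := by
        rw [← hm, ← hn, ← zpow_add, ← zpow_add, add_comm]
      exact congrArg Subtype.val this
    exact lemC hp (hexpS H) hz le_rfl hzD hzt (hfr H hH)
  -- central members are generated by any nontrivial element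
  have app1 : ∀ K ∈ 𝓗, K ≤ Subgroup.center P →
      ∀ k, k ∈ K → k ≠ 1 → Subgroup.closure {k} = K := by
    intro K hK hKc k hk hk1
    have hKab : ∀ x y : ↥K, x * y = y * x := by
      intro x y
      exact Subtype.ext (Subgroup.mem_center_iff.mp (hKc y.2) (x : P))
    have htop : Subgroup.closure {(⟨k, hk⟩ : ↥K)} = ⊤ := by
      by_contra hne
      refine lemC hp (hexpS K) ?_ (D := ⊥) ?_ ?_ hne (hfr K hK)
      · rw [Subgroup.mem_center_iff]; intro g; exact hKab g _
      · rw [commutator_def, Subgroup.commutator_le]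
        intro g1 _ g2 _
        rw [Subgroup.mem_bot, commutatorElement_def, hKab g1 g2]
        group
      · rw [Subgroup.mem_bot]
        intro h
        exact hk1 (congrArg Subtype.val h)
    have := congrArg (Subgroup.map K.subtype) htop
    rwa [MonoidHom.map_closure, Set.image_singleton, ← MonoidHom.range_eq_map,
      Subgroup.range_subtype] at this
  have hQQle : ⁅Q, Q⁆ ≤ Subgroup.center P := by
    refine le_trans ?_ hclass
    rw [commutator_def]
    exact Subgroup.commutator_mono le_top le_top
  have hQmem : ∀ H, H ∈ 𝓗 → ¬ H ≤ Subgroup.center P → H ≤ Q := by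
    intro H h1 h2
    rw [hQ]
    exact le_sSup ⟨h1, h2⟩
  -- main induction for Q ⊓ C(Q) ≤ [Q,Q]
  have use1 : ∀ (n : ℕ) (t : Finset (Subgroup P)),
      t.card ≤ n → ↑t ⊆ {H | H ∈ 𝓗 ∧ ¬ H ≤ Subgroup.center P} →
      ∀ x ∈ sSup (↑t : Set (Subgroup P)), x ∈ Subgroup.centralizer (Q : Set P) →
      x ∈ ⁅Q, Q⁆ := by
    intro n
    induction n with
    | zero =>
      intro t hcard hsub x hx _
      rw [Nat.le_zero, Finset.card_eq_zero] at hcard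
      subst hcard
      simp only [Finset.coe_empty, sSup_empty, Subgroup.mem_bot] at hx
      rw [hx]; exact one_mem _
    | succ n ih =>
      intro t hcard hsub x hx hxc
      rcases t.eq_empty_or_nonempty with rfl | ⟨H, hHt⟩
      · simp only [Finset.coe_empty, sSup_empty, Subgroup.mem_bot] at hx
        rw [hx]; exact one_mem _
      · have hH : H ∈ 𝓗 ∧ ¬ H ≤ Subgroup.center P := hsub hHt
        have hsplit : sSup (↑t : Set (Subgroup P)) =
            H ⊔ sSup (↑(t.erase H) : Set (Subgroup P)) := by
          conv_lhs => rw [← Finset.insert_erase hHt]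
          rw [Finset.coe_insert, sSup_insert]
        have hWc : sSup (↑(t.erase H) : Set (Subgroup P)) ≤
            Subgroup.centralizer (H : Set P) := by
          apply sSup_le
          intro K hK
          obtain ⟨hne, hKt⟩ := Finset.mem_erase.mp (Finset.mem_coe.mp hK)
          intro k hk
          exact Subgroup.mem_centralizer_iff.mpr
            (fun y hy => hcd.1 H hH.1 K (hsub hKt).1 (fun e => hne e.symm) y hy k hk)
        rw [hsplit] at hx
        obtain ⟨h, hhH, w, hwW, rfl⟩ := sup_mul_rep hWc hx
        have hHQ : H ≤ Q := hQmem H hH.1 hH.2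
        have hhc : ∀ y ∈ H, h * y = y * h := by
          intro y hy
          have hxy : y * (h * w) = (h * w) * y :=
            Subgroup.mem_centralizer_iff.mp hxc y (hHQ hy)
          have hwy : y * w = w * y := Subgroup.mem_centralizer_iff.mp (hWc hwW) y hy
          have hkey : (y * h) * w = (h * y) * w := by
            calc (y * h) * w = y * (h * w) := by group
              _ = (h * w) * y := hxy
              _ = h * (w * y) := by group
              _ = h * (y * w) := by rw [← hwy]
              _ = (h * y) * w := by group
          exact (mul_right_cancel hkey).symm
        have hhQ' : h ∈ ⁅Q, Q⁆ :=
          Subgroup.commutator_mono hHQ hHQ (lemA H hH.1 hH.2 h hhH hhc)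
        have hhcent : h ∈ Subgroup.centralizer (Q : Set P) :=
          Subgroup.center_le_centralizer _ (hQQle hhQ')
        have hwcent : w ∈ Subgroup.centralizer (Q : Set P) := by
          have he : w = h⁻¹ * (h * w) := by group
          rw [he]
          exact mul_mem (inv_mem hhcent) hxc
        have hcard' : (t.erase H).card ≤ n := by
          have := Finset.card_erase_of_mem hHt
          omega
        have hsub' : ↑(t.erase H) ⊆ {H | H ∈ 𝓗 ∧ ¬ H ≤ Subgroup.center P} :=
          fun K hK => hsub (Finset.mem_coe.mpr
            (Finset.mem_of_mem_erase (Finset.mem_coe.mp hK)))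
        exact mul_mem hhQ' (ih (t.erase H) hcard' hsub' w hwW hwcent)
  -- induction for Q ⊓ A = ⊥
  have use2 : ∀ (n : ℕ) (t : Finset (Subgroup P)),
      t.card ≤ n → ↑t ⊆ {H | H ∈ 𝓗 ∧ H ≤ Subgroup.center P} →
      ∀ x ∈ sSup (↑t : Set (Subgroup P)), x ∈ Q → x = 1 := by
    intro n
    induction n with
    | zero =>
      intro t hcard hsub x hx _
      rw [Nat.le_zero, Finset.card_eq_zero] at hcard
      subst hcard
      simpa using hx
    | succ n ih =>
      intro t hcard hsub x hx hxQ
      rcases t.eq_empty_or_nonempty with rfl | ⟨K, hKt⟩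
      · simpa using hx
      · have hK : K ∈ 𝓗 ∧ K ≤ Subgroup.center P := hsub hKt
        have hsplit : sSup (↑t : Set (Subgroup P)) =
            K ⊔ sSup (↑(t.erase K) : Set (Subgroup P)) := by
          conv_lhs => rw [← Finset.insert_erase hKt]
          rw [Finset.coe_insert, sSup_insert]
        have hWc : sSup (↑(t.erase K) : Set (Subgroup P)) ≤
            Subgroup.centralizer (K : Set P) := by
          refine le_trans le_top ?_
          intro g _
          exact Subgroup.mem_centralizer_iff.mpr
            (fun y hy => (Subgroup.mem_center_iff.mp (hK.2 hy) g).symm)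
        rw [hsplit] at hx
        obtain ⟨k, hkK, w, hwW, rfl⟩ := sup_mul_rep hWc hx
        by_cases hk1 : k = 1
        · subst hk1
          rw [one_mul] at hxQ ⊢
          have hcard' : (t.erase K).card ≤ n := by
            have := Finset.card_erase_of_mem hKt
            omega
          have hsub' : ↑(t.erase K) ⊆ {H | H ∈ 𝓗 ∧ H ≤ Subgroup.center P} :=
            fun H hH => hsub (Finset.mem_coe.mpr
              (Finset.mem_of_mem_erase (Finset.mem_coe.mp hH)))
          exact ih (t.erase K) hcard' hsub' w hwW hxQ
        · exfalso
          have hQle : Q ≤ sSup (𝓗 \ {K}) := by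
            rw [hQ]
            apply sSup_le_sSup
            intro H hH
            exact ⟨hH.1, fun he => hH.2 ((Set.mem_singleton_iff.mp he) ▸ hK.2)⟩
          have hWle : sSup (↑(t.erase K) : Set (Subgroup P)) ≤ sSup (𝓗 \ {K}) := by
            apply sSup_le_sSup
            intro H hH
            obtain ⟨hne, hHt⟩ := Finset.mem_erase.mp (Finset.mem_coe.mp hH)
            exact ⟨(hsub hHt).1, hne⟩
          have hkW : k ∈ sSup (𝓗 \ {K}) := by
            have he : k = (k * w) * w⁻¹ := by group
            rw [he]
            exact mul_mem (hQle hxQ) (inv_mem (hWle hwW))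
          have hKle : K ≤ sSup (𝓗 \ {K}) := by
            conv_lhs => rw [← app1 K hK.1 hK.2 k hkK hk1]
            exact (Subgroup.closure_le _).mpr (Set.singleton_subset_iff.mpr hkW)
          have htop : sSup (𝓗 \ {K}) = ⊤ := by
            rw [eq_top_iff, ← hcd.2.1]
            apply sSup_le
            intro H hH
            by_cases hHK : H = K
            · exact hHK ▸ hKle
            · exact le_sSup ⟨hH, hHK⟩
          have heq := hcd.2.2 (𝓗 \ {K}) Set.diff_subset htop
          have : K ∈ 𝓗 \ {K} := by rw [heq]; exact hK.1
          exact this.2 rfl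
  have hAcen : A ≤ Subgroup.center P := by
    rw [hA]
    exact sSup_le (fun H hH => hH.2)
  have hQA : Q ⊔ A = ⊤ := by
    rw [hQ, hA, ← sSup_union, ← hcd.2.1]
    congr 1
    ext H
    constructor
    · rintro (h | h) <;> exact h.1
    · intro h
      by_cases hc : H ≤ Subgroup.center P
      · exact Or.inr ⟨h, hc⟩
      · exact Or.inl ⟨h, hc⟩
  have hfinQ : ({H | H ∈ 𝓗 ∧ ¬ H ≤ Subgroup.center P} : Set (Subgroup P)).Finite :=
    Set.toFinite _
  have hfinA : ({H | H ∈ 𝓗 ∧ H ≤ Subgroup.center P} : Set (Subgroup P)).Finite :=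
    Set.toFinite _
  have key3 : ∀ x ∈ Q, x ∈ Subgroup.centralizer (Q : Set P) → x ∈ ⁅Q, Q⁆ := by
    intro x hxQ hxc
    refine use1 hfinQ.toFinset.card hfinQ.toFinset le_rfl ?_ x ?_ hxc
    · rw [Set.Finite.coe_toFinset]
    · rw [Set.Finite.coe_toFinset, ← hQ]
      exact hxQ
  refine ⟨?_, hQA, ?_, ?_⟩
  · rw [eq_bot_iff]
    intro x hx
    rw [Subgroup.mem_inf] at hx
    rw [Subgroup.mem_bot]
    refine use2 hfinA.toFinset.card hfinA.toFinset le_rfl ?_ x ?_ hx.1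
    · rw [Set.Finite.coe_toFinset]
    · rw [Set.Finite.coe_toFinset, ← hA]
      exact hx.2
  · apply le_antisymm
    · refine le_inf ?_ (le_trans hQQle (Subgroup.center_le_centralizer _))
      rw [Subgroup.commutator_le]
      intro g1 h1 g2 h2
      rw [commutatorElement_def]
      exact mul_mem (mul_mem (mul_mem h1 h2) (inv_mem h1)) (inv_mem h2)
    · intro x hx
      rw [Subgroup.mem_inf] at hx
      exact key3 x hx.1 hx.2
  · apply le_antisymm
    · exact sup_le hQQle hAcen
    · intro x hxZ
      have hAc : A ≤ Subgroup.centralizer (Q : Set P) :=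
        le_trans hAcen (Subgroup.center_le_centralizer _)
      have hxQA : x ∈ Q ⊔ A := hQA ▸ Subgroup.mem_top x
      obtain ⟨q, hq, a, ha, rfl⟩ := sup_mul_rep hAc hxQA
      have hqc : q ∈ Subgroup.centralizer (Q : Set P) := by
        have he : q = (q * a) * a⁻¹ := by group
        rw [he]
        exact mul_mem (Subgroup.center_le_centralizer _ hxZ) (inv_mem (hAc ha))
      exact mul_mem (Subgroup.mem_sup_left (key3 q hq hqc)) (Subgroup.mem_sup_right ha)
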